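/- If X is a separable metric space, then for the Hausdorff measure of noncompactness χ, Δ_{X,χ}(ε) = Δ'_{X,χ}(ε) for all ε in [0, χ(B_X)]. -/

import Mathlib

open Metric Set Bornology Pointwise Filter Topology

noncomputable section

/-- A measure of noncompactness on a normed space `X`. -/
def IsMNC {X : Type*} [NormedAddCommGroup X] (φ : Set X → ℝ) : Prop :=
  (∀ A : Set X, 0 ≤ φ A) ∧
  (∀ A : Set X, IsBounded A → (φ A = 0 ↔ IsCompact (closure A))) ∧
  (∀ A : Set X, φ (closure A) = φ A) ∧
  (∀ A B : Set X, φ (A ∪ B) ≤ max (φ A) (φ B))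

/-- An infinite bounded set `A` is `φ`-minimal if every infinite subset has the same measure. -/
def PhiMinimal {X : Type*} [NormedAddCommGroup X] (φ : Set X → ℝ) (A : Set X) : Prop :=
  A.Infinite ∧ IsBounded A ∧ ∀ B ⊆ A, B.Infinite → φ B = φ A

/-- The modulus of noncompact convexity `Δ_{X,φ}`. -/
def Delta {X : Type*} [NormedAddCommGroup X] [NormedSpace ℝ X] (φ : Set X → ℝ) (ε : ℝ) : ℝ :=
  sInf {r | ∃ A : Set X, A ⊆ closedBall 0 1 ∧ ε < φ A ∧
    r = 1 - Metric.infDist 0 (convexHull ℝ A)}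

/-- The new modulus `Δ'_{X,φ}`, where the infimum is over `φ`-minimal sets. -/
def Delta' {X : Type*} [NormedAddCommGroup X] [NormedSpace ℝ X] (φ : Set X → ℝ) (ε : ℝ) : ℝ :=
  sInf {r | ∃ A : Set X, A ⊆ closedBall 0 1 ∧ PhiMinimal φ A ∧ ε < φ A ∧
    r = 1 - Metric.infDist 0 (convexHull ℝ A)}

/-- `φ` is minimalizable. -/
def Minimalizable {X : Type*} [NormedAddCommGroup X] (φ : Set X → ℝ) : Prop :=
  ∀ A : Set X, A.Infinite → IsBounded A → ∀ δ > 0,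
    ∃ B ⊆ A, PhiMinimal φ B ∧ φ A - δ ≤ φ B

/-- `φ` is strictly minimalizable. -/
def StrictlyMinimalizable {X : Type*} [NormedAddCommGroup X] (φ : Set X → ℝ) : Prop :=
  ∀ A : Set X, A.Infinite → IsBounded A →
    ∃ B ⊆ A, PhiMinimal φ B ∧ φ B = φ A

/-- The Kuratowski measure of noncompactness `α`. -/
def kuratowskiMNC {X : Type*} [NormedAddCommGroup X] (A : Set X) : ℝ :=
  sInf {ε | 0 < ε ∧ ∃ S : Finset (Set X), (∀ s ∈ S, Metric.diam s ≤ ε) ∧ A ⊆ ⋃ s ∈ S, s}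

/-- The Hausdorff measure of noncompactness `χ`. -/
def hausdorffMNC {X : Type*} [NormedAddCommGroup X] (A : Set X) : ℝ :=
  sInf {ε | 0 < ε ∧ ∃ F : Finset X, A ⊆ ⋃ x ∈ F, closedBall x ε}

/-- The Istratescu (separation) measure of noncompactness `β`. -/
def istratescuMNC {X : Type*} [NormedAddCommGroup X] (A : Set X) : ℝ :=
  sSup {r | 0 < r ∧ ∃ B ⊆ A, B.Infinite ∧ ∀ x ∈ B, ∀ y ∈ B, x ≠ y → r ≤ dist x y}

namespace MNCAux

variable {X : Type*} [NormedAddCommGroup X]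

def coverSet (A : Set X) : Set ℝ :=
  {ε | 0 < ε ∧ ∃ F : Finset X, A ⊆ ⋃ x ∈ F, closedBall x ε}

lemma hmnc_def (A : Set X) : hausdorffMNC A = sInf (coverSet A) := rfl

lemma coverSet_bddBelow (A : Set X) : BddBelow (coverSet A) :=
  ⟨0, fun _ h => h.1.le⟩

lemma hmnc_nonneg (A : Set X) : 0 ≤ hausdorffMNC A :=
  Real.sInf_nonneg (fun _ h => h.1.le)

lemma coverSet_nonempty {A : Set X} (h : IsBounded A) : (coverSet A).Nonempty := by
  obtain ⟨R, hR⟩ := h.subset_closedBall 0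
  refine ⟨max R 1, lt_of_lt_of_le one_pos (le_max_right _ _), {(0:X)}, ?_⟩
  intro x hx
  simp only [Finset.mem_singleton, iUnion_iUnion_eq_left]
  exact closedBall_subset_closedBall (le_max_left _ _) (hR hx)

lemma hmnc_mono {A B : Set X} (hAB : A ⊆ B) (hB : IsBounded B) :
    hausdorffMNC A ≤ hausdorffMNC B :=
  csInf_le_csInf (coverSet_bddBelow A) (coverSet_nonempty hB)
    (fun ε hε => ⟨hε.1, hε.2.choose, hAB.trans hε.2.choose_spec⟩)

lemma hmnc_le_ball {A : Set X} {x : X} {q : ℝ} (hq : 0 < q) (h : A ⊆ closedBall x q) :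
    hausdorffMNC A ≤ q :=
  csInf_le (coverSet_bddBelow A) ⟨hq, {x}, by simpa using h⟩

lemma hmnc_finite {A : Set X} (h : A.Finite) : hausdorffMNC A = 0 := by
  refine le_antisymm (le_of_forall_gt_imp_ge_of_dense fun c hc => ?_) (hmnc_nonneg A)
  refine csInf_le (coverSet_bddBelow A) ⟨hc, h.toFinset, fun a ha => ?_⟩
  exact mem_biUnion (h.mem_toFinset.2 ha) (mem_closedBall_self hc.le)

lemma infinite_of_hmnc_pos {A : Set X} (h : 0 < hausdorffMNC A) : A.Infinite := by
  by_contra h'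
  rw [Set.not_infinite] at h'
  rw [hmnc_finite h'] at h
  exact lt_irrefl _ h

lemma hmnc_union_le {A B : Set X} (hA : IsBounded A) (hB : IsBounded B) :
    hausdorffMNC (A ∪ B) ≤ max (hausdorffMNC A) (hausdorffMNC B) := by
  classical
  refine le_of_forall_gt_imp_ge_of_dense fun c hc => ?_
  obtain ⟨ε₁, hε₁, hlt₁⟩ := exists_lt_of_csInf_lt (coverSet_nonempty hA)
    (lt_of_le_of_lt (le_max_left _ _) hc)
  obtain ⟨ε₂, hε₂, hlt₂⟩ := exists_lt_of_csInf_lt (coverSet_nonempty hB)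
    (lt_of_le_of_lt (le_max_right _ _) hc)
  have hc0 : 0 < c := lt_of_le_of_lt (le_max_of_le_left (hmnc_nonneg A)) hc
  obtain ⟨F₁, hF₁⟩ := hε₁.2
  obtain ⟨F₂, hF₂⟩ := hε₂.2
  refine csInf_le (coverSet_bddBelow _) ⟨hc0, F₁ ∪ F₂, union_subset ?_ ?_⟩
  · refine hF₁.trans ?_
    intro x hx
    simp only [mem_iUnion, Finset.mem_union] at hx ⊢
    obtain ⟨y, hy, hxy⟩ := hx
    exact ⟨y, Or.inl hy, closedBall_subset_closedBall hlt₁.le hxy⟩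
  · refine hF₂.trans ?_
    intro x hx
    simp only [mem_iUnion, Finset.mem_union] at hx ⊢
    obtain ⟨y, hy, hxy⟩ := hx
    exact ⟨y, Or.inr hy, closedBall_subset_closedBall hlt₂.le hxy⟩

lemma exists_cover {A : Set X} (hA : IsBounded A) {c : ℝ} (h : hausdorffMNC A < c) :
    ∃ ε, 0 < ε ∧ ε < c ∧ ∃ F : Finset X, A ⊆ ⋃ x ∈ F, closedBall x ε := by
  obtain ⟨ε, hε, hlt⟩ := exists_lt_of_csInf_lt (coverSet_nonempty hA) h
  exact ⟨ε, hε.1, hlt, hε.2⟩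


open TopologicalSpace in
theorem exists_phiMinimal {X : Type*} [NormedAddCommGroup X] [SeparableSpace X]
    (A : Set X) (hAinf : A.Infinite) (hAb : IsBounded A) :
    ∃ B ⊆ A, PhiMinimal (fun C : Set X => hausdorffMNC C) B ∧
      hausdorffMNC B = hausdorffMNC A := by
  classical
  set r := hausdorffMNC A with hrdef
  rcases eq_or_lt_of_le (hmnc_nonneg A) with h0 | hpos
  · refine ⟨A, subset_rfl, ⟨hAinf, hAb, fun B hB _ => le_antisymm (hmnc_mono hB hAb)
      (((h0.symm).le).trans (hmnc_nonneg B))⟩, rfl⟩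
  -- r > 0
  obtain ⟨s, hsc, hsd⟩ := exists_countable_dense X
  have hsne : s.Nonempty := hsd.nonempty
  obtain ⟨f, hf⟩ := Set.Countable.exists_eq_range hsc hsne
  obtain ⟨g, hg⟩ := exists_surjective_nat ℚ
  set U : ℕ → Set X := fun n => closedBall (f n.unpair.1) ((g n.unpair.2 : ℝ)) with hUdef
  -- the chain
  set Ach : ℕ → Set X := fun n => Nat.rec A
    (fun n An => if hausdorffMNC (An ∩ U n) = r then An ∩ U n else An \ U n) n with hAchdef
  have hA1 : ∀ n, Ach (n+1) =
      if hausdorffMNC (Ach n ∩ U n) = r then Ach n ∩ U n else Ach n \ U n := fun n => rfl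
  have hstep : ∀ n, Ach (n+1) ⊆ Ach n := by
    intro n
    rw [hA1 n]
    split
    · exact inter_subset_left
    · exact diff_subset
  have hsub : ∀ n, Ach n ⊆ A := by
    intro n
    induction n with
    | zero => exact subset_rfl
    | succ n ih => exact (hstep n).trans ih
  have hanti : ∀ m n, m ≤ n → Ach n ⊆ Ach m := by
    intro m n hmn
    induction n with
    | zero => rw [Nat.le_zero.mp hmn]
    | succ n ih =>
      rcases Nat.lt_or_ge m (n+1) with h | h
      · exact (hstep n).trans (ih (Nat.lt_succ_iff.mp h))
      · rw [Nat.le_antisymm hmn h]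
  have hb : ∀ n, IsBounded (Ach n) := fun n => hAb.subset (hsub n)
  have hchi : ∀ n, hausdorffMNC (Ach n) = r := by
    intro n
    induction n with
    | zero => rfl
    | succ n ih =>
      rw [hA1 n]
      split
      · assumption
      · rename_i hne
        refine le_antisymm (le_of_le_of_eq (hmnc_mono diff_subset (hb n)) ih) ?_
        have hin : Ach n ∩ U n ∪ Ach n \ U n = Ach n := inter_union_diff _ _
        have h1 : r ≤ max (hausdorffMNC (Ach n ∩ U n)) (hausdorffMNC (Ach n \ U n)) := by
          have h2 := hmnc_union_le (A := Ach n ∩ U n) (B := Ach n \ U n)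
            ((hb n).subset inter_subset_left) ((hb n).subset diff_subset)
          rw [hin] at h2
          exact ih ▸ h2
        rcases le_max_iff.mp h1 with h | h
        · exact absurd (le_antisymm (le_of_le_of_eq (hmnc_mono inter_subset_left (hb n)) ih) h) hne
        · exact h
  have hinf : ∀ n, (Ach n).Infinite := fun n =>
    infinite_of_hmnc_pos (by rw [hchi n]; exact hpos)
  have hdich : ∀ n, Ach (n+1) ⊆ U n ∨ Ach (n+1) ∩ U n = ∅ := by
    intro n
    rw [hA1 n]
    split
    · exact Or.inl inter_subset_right
    · exact Or.inr (diff_inter_self)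
  -- diagonal sequence
  have hpick : ∀ (n : ℕ) (t : Finset X), ((Ach (n+1)) \ ↑t).Nonempty :=
    fun n t => ((hinf (n+1)).diff t.finite_toSet).nonempty
  set h : ℕ → X × Finset X := fun n => Nat.rec
    ((hpick 0 ∅).some, {(hpick 0 ∅).some})
    (fun n p => ((hpick (n+1) p.2).some, insert ((hpick (n+1) p.2).some) p.2)) n with hhdef
  set a : ℕ → X := fun n => (h n).1 with hadef
  have hh1 : ∀ n, h (n+1) =
      ((hpick (n+1) (h n).2).some, insert ((hpick (n+1) (h n).2).some) (h n).2) := fun n => rfl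
  have ha_mem : ∀ n, a n ∈ Ach (n+1) := by
    intro n
    cases n with
    | zero => exact ((hpick 0 ∅).some_mem).1
    | succ n => exact ((hpick (n+1) (h n).2).some_mem).1
  have ha_in2 : ∀ n, a n ∈ (h n).2 := by
    intro n
    cases n with
    | zero => exact Finset.mem_singleton_self _
    | succ n => exact Finset.mem_insert_self _ _
  have h2_mono : ∀ n, (h n).2 ⊆ (h (n+1)).2 := by
    intro n
    rw [hh1 n]
    exact Finset.subset_insert _ _
  have h2_mono' : ∀ m n, m ≤ n → (h m).2 ⊆ (h n).2 := by
    intro m n hmn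
    induction n with
    | zero => rw [Nat.le_zero.mp hmn]
    | succ n ih =>
      rcases Nat.lt_or_ge m (n+1) with hlt | hge
      · exact (ih (Nat.lt_succ_iff.mp hlt)).trans (h2_mono n)
      · rw [Nat.le_antisymm hmn hge]
  have ha_not : ∀ n, a (n+1) ∉ (h n).2 := by
    intro n hmem
    exact ((hpick (n+1) (h n).2).some_mem).2 hmem
  have hainj : Function.Injective a := by
    have key : ∀ m n, m < n → a m ≠ a n := by
      intro m n hmn heq
      obtain ⟨k, rfl⟩ := Nat.exists_eq_add_of_lt hmn
      have h1 : a m ∈ (h (m + k)).2 := h2_mono' m (m+k) (Nat.le_add_right _ _) (ha_in2 m)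
      rw [heq] at h1
      exact ha_not (m+k) (by simpa [Nat.add_comm, Nat.add_assoc, Nat.add_left_comm] using h1)
    intro m n heq
    rcases lt_trichotomy m n with h | h | h
    · exact absurd heq (key m n h)
    · exact h
    · exact absurd heq.symm (key n m h)
  set B : Set X := Set.range a with hBdef
  have hBA : B ⊆ A := range_subset_iff.2 fun n => hsub (n+1) (ha_mem n)
  have hBb : IsBounded B := hAb.subset hBA
  -- key claim
  have key : ∀ C ⊆ B, C.Infinite → r ≤ hausdorffMNC C := by
    intro C hCB hCinf
    by_contra hlt
    push_neg at hlt
    have hCb : IsBounded C := hBb.subset hCB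
    obtain ⟨ε, hε0, hεr, F, hF⟩ := exists_cover hCb hlt
    obtain ⟨q, hq1, hq2⟩ := exists_rat_btwn hεr
    have hq0 : (0:ℝ) < (q:ℝ) := lt_trans hε0 hq1
    -- for each x, choose an index m x with ball x ε ⊆ U (m x) and U (m x) a closed ball of radius q
    have hball : ∀ x : X, ∃ mx : ℕ, closedBall x ε ⊆ U mx ∧ ∃ z, U mx = closedBall z (q:ℝ) := by
      intro x
      obtain ⟨d, hds, hdd⟩ := hsd.exists_dist_lt x (sub_pos.mpr hq1)
      rw [hf] at hds
      obtain ⟨i, rfl⟩ := hds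
      obtain ⟨j, rfl⟩ := hg q
      refine ⟨Nat.pair i j, ?_, f i, by simp [hUdef, Nat.unpair_pair]⟩
      intro y hy
      simp only [hUdef, Nat.unpair_pair, mem_closedBall]
      calc dist y (f i) ≤ dist y x + dist x (f i) := dist_triangle _ _ _
        _ ≤ ε + (↑(g j) - ε) := add_le_add (mem_closedBall.mp hy) hdd.le
        _ = ↑(g j) := by ring
    choose m hm hz using hball
    -- pigeonhole
    have hpre : (a ⁻¹' C).Infinite := hCinf.preimage hCB
    have hcover : a ⁻¹' C ⊆ ⋃ x ∈ F, (a ⁻¹' C ∩ a ⁻¹' (U (m x))) := by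
      intro k hk
      have := hF hk
      simp only [mem_iUnion] at this ⊢
      obtain ⟨x, hx, hmem⟩ := this
      exact ⟨x, hx, hk, hm x hmem⟩
    have hex : ∃ x ∈ F, (a ⁻¹' C ∩ a ⁻¹' (U (m x))).Infinite := by
      by_contra hfin
      push_neg at hfin
      exact hpre ((Set.Finite.biUnion F.finite_toSet hfin).subset hcover)
    obtain ⟨x, hxF, hTinf⟩ := hex
    obtain ⟨k, hkT, hk⟩ := hTinf.exists_gt (m x)
    have hk1 : a k ∈ Ach (m x + 1) := hanti (m x + 1) (k+1) (by omega) (ha_mem k)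
    have hk2 : a k ∈ U (m x) := hkT.2
    rcases hdich (m x) with hsubU | hdisj
    · obtain ⟨z, hzeq⟩ := hz x
      have := hmnc_le_ball hq0 (hzeq ▸ hsubU)
      rw [hchi (m x + 1)] at this
      exact absurd (lt_of_le_of_lt this hq2) (lt_irrefl r)
    · exact absurd (mem_inter hk1 hk2) (by rw [hdisj]; exact notMem_empty _)
  have hBinf : B.Infinite := Set.infinite_range_of_injective hainj
  have hBr : hausdorffMNC B = r := le_antisymm (hmnc_mono hBA hAb) (key B subset_rfl hBinf)
  refine ⟨B, hBA, ⟨hBinf, hBb, fun C hC hCinf => ?_⟩, hBr⟩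
  show hausdorffMNC C = hausdorffMNC B
  rw [hBr]
  exact le_antisymm (le_of_le_of_eq (hmnc_mono hC hBb) hBr) (key C hC hCinf)

end MNCAux


open MNCAux in
/-- in a separable (metric) space, `Δ_{X,χ}(ε) = Δ'_{X,χ}(ε)`. -/
theorem delta_eq_delta'_hausdorff_of_separable {X : Type*} [NormedAddCommGroup X]
    [NormedSpace ℝ X] [TopologicalSpace.SeparableSpace X] :
    ∀ ε ∈ Set.Icc (0:ℝ) (hausdorffMNC (closedBall (0:X) 1)),
      Delta (fun A : Set X => hausdorffMNC A) ε = Delta' (fun A : Set X => hausdorffMNC A) ε := by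
  show ∀ ε ∈ Set.Icc (0:ℝ) (hausdorffMNC (closedBall (0:X) 1)),
    sInf {r | ∃ A : Set X, A ⊆ closedBall 0 1 ∧ ε < hausdorffMNC A ∧
      r = 1 - Metric.infDist 0 (convexHull ℝ A)} =
    sInf {r | ∃ A : Set X, A ⊆ closedBall 0 1 ∧
      PhiMinimal (fun A : Set X => hausdorffMNC A) A ∧ ε < hausdorffMNC A ∧
      r = 1 - Metric.infDist 0 (convexHull ℝ A)}
  rintro ε ⟨hε0, -⟩
  classical
  set S : Set ℝ := {r | ∃ A : Set X, A ⊆ closedBall 0 1 ∧ ε < hausdorffMNC A ∧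
    r = 1 - Metric.infDist 0 (convexHull ℝ A)} with hSdef
  set S' : Set ℝ := {r | ∃ A : Set X, A ⊆ closedBall 0 1 ∧
    PhiMinimal (fun A : Set X => hausdorffMNC A) A ∧ ε < hausdorffMNC A ∧
    r = 1 - Metric.infDist 0 (convexHull ℝ A)} with hS'def
  have hsub : S' ⊆ S := by rintro r ⟨A, h1, _, h3, h4⟩; exact ⟨A, h1, h3, h4⟩
  have hlb : ∀ r ∈ S, 0 ≤ r := by
    rintro r ⟨A, h1, h2, rfl⟩
    have hApos : 0 < hausdorffMNC A := lt_of_le_of_lt hε0 h2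
    obtain ⟨x, hx⟩ := (infinite_of_hmnc_pos hApos).nonempty
    have hd : Metric.infDist 0 (convexHull ℝ A) ≤ 1 := by
      refine le_trans (Metric.infDist_le_dist_of_mem (subset_convexHull ℝ A hx)) ?_
      rw [dist_comm]; exact mem_closedBall.mp (h1 hx)
    linarith
  have hS'lb : BddBelow S' := ⟨0, fun r hr => hlb r (hsub hr)⟩
  have hSlb : BddBelow S := ⟨0, hlb⟩
  have hmain : ∀ r ∈ S, ∃ r' ∈ S', r' ≤ r := by
    rintro r ⟨A, h1, h2, rfl⟩
    have hApos : 0 < hausdorffMNC A := lt_of_le_of_lt hε0 h2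
    have hAb : IsBounded A := (isBounded_closedBall).subset h1
    obtain ⟨B, hBA, hmin, hBr⟩ := exists_phiMinimal A (infinite_of_hmnc_pos hApos) hAb
    have hBne : (convexHull ℝ B).Nonempty :=
      ⟨_, subset_convexHull ℝ B hmin.1.nonempty.some_mem⟩
    refine ⟨1 - Metric.infDist 0 (convexHull ℝ B),
      ⟨B, hBA.trans h1, hmin, by rw [hBr]; exact h2, rfl⟩, ?_⟩
    have hd := Metric.infDist_le_infDist_of_subset (convexHull_mono hBA) hBne (x := (0:X))
    linarith
  rcases Set.eq_empty_or_nonempty S with hS | hS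
  · have hS'e : S' = ∅ := Set.subset_empty_iff.mp (hS ▸ hsub)
    rw [hS, hS'e]
  · have hS' : S'.Nonempty := by
      obtain ⟨r, hr⟩ := hS
      obtain ⟨r', hr', -⟩ := hmain r hr
      exact ⟨r', hr'⟩
    refine le_antisymm (csInf_le_csInf hSlb hS' hsub) (le_csInf hS ?_)
    intro r hr
    obtain ⟨r', hr', hle⟩ := hmain r hr
    exact le_trans (csInf_le hS'lb hr') hle
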